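/- Fix u ≤ d ≤ r, and define the NIECE estimator β̂^N(ω) = V_u D_u^{-1} U_u' Y(ω) (where V_u, U_u, D_u consist of the first u permuted columns/entries). Then the conditional reducible prediction risk satisfies 𝔼[ tr( (β̂^N − V_d V_d' β*)' Σ_x (β̂^N − V_d V_d' β*) ) ] = tr(Σ_ε)·tr(V_u D_u^{-2} V_u' Σ_x) + vec(β*)'(I_q ⊗ (V_u V_u' − V_d V_d') Σ_x (V_u V_u' − V_d V_d')) vec(β*). -/

import Mathlib

open Matrix
open scoped Kronecker

/-- The vectorization `vec(β)` of a `p × q` matrix, indexed to match `I_q ⊗ A`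
(the index `(k, i)` with `k ∈ Fin q`, `i ∈ Fin p` corresponds to entry `β i k`). -/
def vecM {p q : ℕ} (β : Matrix (Fin p) (Fin q) ℝ) : Fin q × Fin p → ℝ :=
  fun ki => β ki.2 ki.1

/-- EgReg reducible prediction risk
`R_E(d, λ) = tr(Σ_ε)·tr(V_d D_d⁻² Φ_d² (Φ_d + λ I_d)⁻² V_d' Σ_x)
  + λ²·vec(β*)'(I_q ⊗ V_d (Φ_d + λ I_d)⁻¹ V_d' Σ_x V_d (Φ_d + λ I_d)⁻¹ V_d') vec(β*)`. -/
noncomputable def RE {p q d : ℕ}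
    (Vd : Matrix (Fin p) (Fin d) ℝ) (Dd Φd : Matrix (Fin d) (Fin d) ℝ)
    (Sx : Matrix (Fin p) (Fin p) ℝ) (Se : Matrix (Fin q) (Fin q) ℝ)
    (β : Matrix (Fin p) (Fin q) ℝ) (lam : ℝ) : ℝ :=
  Se.trace * (Vd * (Dd ^ 2)⁻¹ * Φd ^ 2 * ((Φd + lam • 1) ^ 2)⁻¹ * Vdᵀ * Sx).trace
  + lam ^ 2 * vecM β ⬝ᵥ (((1 : Matrix (Fin q) (Fin q) ℝ) ⊗ₖ
      (Vd * (Φd + lam • 1)⁻¹ * Vdᵀ * Sx * Vd * (Φd + lam • 1)⁻¹ * Vdᵀ)).mulVec (vecM β))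

/-- NIECE reducible prediction risk
`R_N(u, d) = tr(Σ_ε)·tr(V_u D_u⁻² V_u' Σ_x)
  + vec(β*)'(I_q ⊗ (V_u V_u' − V_d V_d') Σ_x (V_u V_u' − V_d V_d')) vec(β*)`. -/
noncomputable def RN {p q u d : ℕ}
    (Vu : Matrix (Fin p) (Fin u) ℝ) (Du : Matrix (Fin u) (Fin u) ℝ)
    (Vd : Matrix (Fin p) (Fin d) ℝ)
    (Sx : Matrix (Fin p) (Fin p) ℝ) (Se : Matrix (Fin q) (Fin q) ℝ)
    (β : Matrix (Fin p) (Fin q) ℝ) : ℝ :=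
  Se.trace * (Vu * (Du ^ 2)⁻¹ * Vuᵀ * Sx).trace
  + vecM β ⬝ᵥ (((1 : Matrix (Fin q) (Fin q) ℝ) ⊗ₖ
      ((Vu * Vuᵀ - Vd * Vdᵀ) * Sx * (Vu * Vuᵀ - Vd * Vdᵀ))).mulVec (vecM β))


open MeasureTheory in
lemma integrable_mul_of_memL2 {Ω : Type*} [MeasurableSpace Ω] {P : Measure Ω}
    {f g : Ω → ℝ} (hf : MemLp f 2 P) (hg : MemLp g 2 P) :
    Integrable (fun ω => f ω * g ω) P := by
  have h1 := (hf.add hg).integrable_sq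
  have h2 := hf.integrable_sq
  have h3 := hg.integrable_sq
  have h : (fun ω => f ω * g ω) = fun ω => ((f ω + g ω) ^ 2 - f ω ^ 2 - g ω ^ 2) * (1 / 2) := by
    funext ω; ring
  rw [h]
  exact ((h1.sub h2).sub h3).mul_const _

lemma trace_quad {p q : ℕ} (S : Matrix (Fin p) (Fin p) ℝ) (Z : Matrix (Fin p) (Fin q) ℝ) :
    (Zᵀ * S * Z).trace = ∑ k, ∑ b, ∑ a, Z a k * S a b * Z b k := by
  simp [Matrix.trace, Matrix.diag, Matrix.mul_apply, Finset.sum_mul]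

lemma vec_quad {p q : ℕ} (C : Matrix (Fin p) (Fin p) ℝ) (β : Matrix (Fin p) (Fin q) ℝ) :
    vecM β ⬝ᵥ (((1 : Matrix (Fin q) (Fin q) ℝ) ⊗ₖ C).mulVec (vecM β)) = (βᵀ * C * β).trace := by
  simp [vecM, dotProduct, Matrix.mulVec, Matrix.trace, Matrix.diag, Matrix.mul_apply,
    Matrix.kroneckerMap_apply, Fintype.sum_prod_type, Matrix.one_apply, ite_mul,
    Finset.mul_sum, Finset.sum_mul]
  refine Finset.sum_congr rfl fun k _ => ?_
  rw [Finset.sum_comm]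
  exact Finset.sum_congr rfl fun i _ => Finset.sum_congr rfl fun j _ => by ring

open MeasureTheory

/-- The largest eigenvalue of a square matrix. -/
noncomputable def maxEig {m : ℕ} (A : Matrix (Fin m) (Fin m) ℝ) : ℝ :=
  sSup {t : ℝ | ∃ w : Fin m → ℝ, w ≠ 0 ∧ A.mulVec w = t • w}

open MeasureTheory

theorem niece_conditional_reducible_risk
    (n p q r : ℕ)
    (X : Matrix (Fin n) (Fin p) ℝ)
    (U : Matrix (Fin n) (Fin r) ℝ) (V : Matrix (Fin p) (Fin r) ℝ) (σ : Fin r → ℝ)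
    (hrank : X.rank = r)
    (hSVD : X = U * Matrix.diagonal σ * Vᵀ)
    (hU : Uᵀ * U = 1) (hV : Vᵀ * V = 1)
    (hσpos : ∀ j, 0 < σ j) (hσanti : Antitone σ)
    (π : Equiv.Perm (Fin r))
    (Sx : Matrix (Fin p) (Fin p) ℝ) (hSx : Sx.PosSemidef)
    (Se : Matrix (Fin q) (Fin q) ℝ) (hSe : Se.PosSemidef)
    (β : Matrix (Fin p) (Fin q) ℝ)
    (u d : ℕ) (hud : u ≤ d) (hdr : d ≤ r)
    -- probability space and mean-zero noise with Var(vec E) = Σ_ε ⊗ I_n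
    {Ω : Type*} [MeasurableSpace Ω] (P : Measure Ω) [IsProbabilityMeasure P]
    (E : Ω → Matrix (Fin n) (Fin q) ℝ)
    (hL2 : ∀ i k, MemLp (fun ω => E ω i k) 2 P)
    (hmean : ∀ i k, ∫ ω, E ω i k ∂P = 0)
    (hcov : ∀ i j k l, ∫ ω, E ω i k * E ω j l ∂P = (if i = j then (1:ℝ) else 0) * Se k l)
    -- the response and the NIECE estimator
    (Y : Ω → Matrix (Fin n) (Fin q) ℝ) (hY : ∀ ω, Y ω = X * β + E ω)
    (Vu : Matrix (Fin p) (Fin u) ℝ)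
    (hVu : Vu = V.submatrix id (fun j => π (Fin.castLE (hud.trans hdr) j)))
    (Uu : Matrix (Fin n) (Fin u) ℝ)
    (hUu : Uu = U.submatrix id (fun j => π (Fin.castLE (hud.trans hdr) j)))
    (Du : Matrix (Fin u) (Fin u) ℝ)
    (hDu : Du = Matrix.diagonal (fun j => σ (π (Fin.castLE (hud.trans hdr) j))))
    (Vd : Matrix (Fin p) (Fin d) ℝ) (hVd : Vd = V.submatrix id (fun j => π (Fin.castLE hdr j)))
    (βN : Ω → Matrix (Fin p) (Fin q) ℝ)
    (hβN : ∀ ω, βN ω = Vu * Du⁻¹ * Uuᵀ * Y ω) :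
    ∫ ω, ((βN ω - Vd * Vdᵀ * β)ᵀ * Sx * (βN ω - Vd * Vdᵀ * β)).trace ∂P =
      RN Vu Du Vd Sx Se β := by
  classical
  set f : Fin u → Fin r := fun j => π (Fin.castLE (hud.trans hdr) j) with hfdef
  have hfinj : Function.Injective f := fun a b h =>
    Fin.castLE_injective _ (π.injective h)
  set A : Matrix (Fin p) (Fin n) ℝ := Vu * Du⁻¹ * Uuᵀ with hAdef
  set M : Matrix (Fin p) (Fin p) ℝ := Vu * Vuᵀ - Vd * Vdᵀ with hMdef
  set K : Matrix (Fin p) (Fin q) ℝ := M * β with hKdef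
  set L : Ω → Matrix (Fin p) (Fin q) ℝ := fun ω => A * E ω with hLdef
  -- basic entry facts
  have hUuU : ∀ (j : Fin u) (s : Fin r),
      ∑ i, U i (f j) * U i s = if f j = s then (1:ℝ) else 0 := by
    intro j s
    have h := congrFun (congrFun hU (f j)) s
    simpa [Matrix.mul_apply, Matrix.one_apply] using h
  have hUuUu : Uuᵀ * Uu = 1 := by
    ext j k
    have h := hUuU j (f k)
    simp only [hUu, Matrix.mul_apply, Matrix.transpose_apply, Matrix.submatrix_apply, id_eq]
    rw [h]
    simp [Matrix.one_apply, hfinj.eq_iff]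
  have hXapp : ∀ i b, X i b = ∑ s, U i s * σ s * V b s := by
    intro i b
    rw [hSVD, Matrix.mul_apply]
    exact Finset.sum_congr rfl fun s _ => by
      rw [Matrix.transpose_apply, Matrix.mul_diagonal]
  have hUX : ∀ (j : Fin u) (b : Fin p), (Uuᵀ * X) j b = σ (f j) * V b (f j) := by
    intro j b
    rw [Matrix.mul_apply]
    simp only [Matrix.transpose_apply, hUu, Matrix.submatrix_apply, id_eq]
    calc ∑ i, U i (f j) * X i b
        = ∑ i, ∑ s, U i (f j) * (U i s * σ s * V b s) := by
          refine Finset.sum_congr rfl fun i _ => ?_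
          rw [hXapp i b, Finset.mul_sum]
      _ = ∑ s, (σ s * V b s) * ∑ i, U i (f j) * U i s := by
          rw [Finset.sum_comm]
          refine Finset.sum_congr rfl fun s _ => ?_
          rw [Finset.mul_sum]
          exact Finset.sum_congr rfl fun i _ => by ring
      _ = σ (f j) * V b (f j) := by
          rw [Finset.sum_eq_single (f j)]
          · rw [hUuU j (f j)]; simp [mul_comm]
          · intro s _ hs
            rw [hUuU j s, if_neg (fun h => hs h.symm), mul_zero]
          · simp
  have hDuinv : Du⁻¹ = Matrix.diagonal (fun j => (σ (f j))⁻¹) := by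
    apply Matrix.inv_eq_right_inv
    rw [hDu, Matrix.diagonal_mul_diagonal]
    have h1 : (fun j : Fin u => σ (f j) * (σ (f j))⁻¹) = fun _ => (1:ℝ) := by
      funext j; exact mul_inv_cancel₀ (ne_of_gt (hσpos _))
    rw [h1, Matrix.diagonal_one]
  have hDuUX : Du⁻¹ * (Uuᵀ * X) = Vuᵀ := by
    ext j b
    rw [hDuinv, Matrix.diagonal_mul, hUX j b]
    rw [inv_mul_cancel_left₀ (ne_of_gt (hσpos _))]
    simp [hVu]
  have hAX : A * X = Vu * Vuᵀ := by
    rw [hAdef]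
    rw [Matrix.mul_assoc, Matrix.mul_assoc, hDuUX]
  have hDuinvT : Du⁻¹ᵀ = Du⁻¹ := by
    rw [hDuinv, Matrix.diagonal_transpose]
  have hAT : Aᵀ = Uu * (Du⁻¹ * Vuᵀ) := by
    rw [hAdef]
    simp [Matrix.transpose_mul, hDuinvT, Matrix.mul_assoc]
  have hAAT : A * Aᵀ = Vu * (Du ^ 2)⁻¹ * Vuᵀ := by
    rw [hAT]
    have h2 : (Du ^ 2)⁻¹ = Du⁻¹ * Du⁻¹ := by rw [sq, Matrix.mul_inv_rev]
    rw [h2]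
    calc A * (Uu * (Du⁻¹ * Vuᵀ))
        = Vu * Du⁻¹ * ((Uuᵀ * Uu) * (Du⁻¹ * Vuᵀ)) := by
          rw [hAdef]; simp [Matrix.mul_assoc]
      _ = Vu * Du⁻¹ * Du⁻¹ * Vuᵀ := by rw [hUuUu]; simp [Matrix.mul_assoc]
      _ = Vu * (Du⁻¹ * Du⁻¹) * Vuᵀ := by simp [Matrix.mul_assoc]
  have hMT : Mᵀ = M := by
    rw [hMdef]
    simp [Matrix.transpose_sub, Matrix.transpose_mul]
  have hSxsym : ∀ a b, Sx a b = Sx b a := by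
    intro a b
    have h := congrFun (congrFun hSx.1 a) b
    simpa [Matrix.conjTranspose_apply] using h.symm
  -- decomposition of the estimator error
  have hZ : ∀ ω, βN ω - Vd * Vdᵀ * β = K + L ω := by
    intro ω
    rw [hβN, hY]
    have h1 : Vu * Du⁻¹ * Uuᵀ * (X * β + E ω) = Vu * Vuᵀ * β + A * E ω := by
      rw [← hAdef, Matrix.mul_add]
      congr 1
      rw [← Matrix.mul_assoc, hAX]
    rw [h1, hKdef, hMdef, hLdef, Matrix.sub_mul]
    abel
  -- integrability facts
  have hEint : ∀ i k, Integrable (fun ω => E ω i k) P :=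
    fun i k => (hL2 i k).integrable one_le_two
  have hLapp : ∀ ω a k, L ω a k = ∑ i, A a i * E ω i k := by
    intro ω a k
    rw [hLdef]
    simp [Matrix.mul_apply]
  have hLmem : ∀ a k, MemLp (fun ω => L ω a k) 2 P := by
    intro a k
    have h : (fun ω => L ω a k) = fun ω => ∑ i, A a i * E ω i k :=
      funext fun ω => hLapp ω a k
    rw [h]
    exact memLp_finset_sum _ (fun i _ => (hL2 i k).const_mul (A a i))
  have hZmem : ∀ a k, MemLp (fun ω => K a k + L ω a k) 2 P :=
    fun a k => (memLp_const (K a k)).add (hLmem a k)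
  have hL0 : ∀ a k, ∫ ω, L ω a k ∂P = 0 := by
    intro a k
    simp only [hLapp]
    rw [integral_finset_sum _ (fun i _ => (hEint i k).const_mul _)]
    simp [integral_const_mul, hmean]
  have hLL : ∀ a b k, ∫ ω, L ω a k * L ω b k ∂P = Se k k * ∑ i, A a i * A b i := by
    intro a b k
    have hpt : ∀ ω, L ω a k * L ω b k
        = ∑ i, ∑ j, (A a i * A b j) * (E ω i k * E ω j k) := by
      intro ω
      rw [hLapp, hLapp, Finset.sum_mul_sum]
      exact Finset.sum_congr rfl fun i _ => Finset.sum_congr rfl fun j _ => by ring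
    simp only [hpt]
    have hint : ∀ (i j : Fin n),
        Integrable (fun ω => (A a i * A b j) * (E ω i k * E ω j k)) P :=
      fun i j => (integrable_mul_of_memL2 (hL2 i k) (hL2 j k)).const_mul _
    rw [integral_finset_sum _ (fun i _ => integrable_finset_sum _ (fun j _ => hint i j))]
    calc ∑ i, ∫ ω, ∑ j, (A a i * A b j) * (E ω i k * E ω j k) ∂P
        = ∑ i, ∑ j, (A a i * A b j) * ((if i = j then (1:ℝ) else 0) * Se k k) := by
          refine Finset.sum_congr rfl fun i _ => ?_
          rw [integral_finset_sum _ (fun j _ => hint i j)]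
          refine Finset.sum_congr rfl fun j _ => ?_
          rw [integral_const_mul, hcov]
      _ = ∑ i, A a i * A b i * Se k k := by
          refine Finset.sum_congr rfl fun i _ => ?_
          rw [Finset.sum_eq_single i]
          · simp
          · intro j _ hj
            rw [if_neg (fun h => hj h.symm)]
            ring
          · simp
      _ = Se k k * ∑ i, A a i * A b i := by
          rw [Finset.mul_sum]
          exact Finset.sum_congr rfl fun i _ => by ring
  have hcore : ∀ (a b : Fin p) (k : Fin q),
      ∫ ω, (K a k + L ω a k) * (K b k + L ω b k) ∂P
        = K a k * K b k + Se k k * ∑ i, A a i * A b i := by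
    intro a b k
    have hpt : (fun ω => (K a k + L ω a k) * (K b k + L ω b k))
        = fun ω => K a k * K b k
            + (K a k * L ω b k + (L ω a k * K b k + L ω a k * L ω b k)) := by
      funext ω; ring
    rw [hpt]
    have i1 : Integrable (fun ω => K a k * L ω b k) P :=
      ((hLmem b k).integrable one_le_two).const_mul _
    have i2 : Integrable (fun ω => L ω a k * K b k) P := by
      have h : (fun ω => L ω a k * K b k) = fun ω => K b k * L ω a k := by
        funext ω; ring
      rw [h]
      exact ((hLmem a k).integrable one_le_two).const_mul _
    have i3 : Integrable (fun ω => L ω a k * L ω b k) P :=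
      integrable_mul_of_memL2 (hLmem a k) (hLmem b k)
    have ig3 : Integrable (fun ω => L ω a k * K b k + L ω a k * L ω b k) P := i2.add i3
    have ig2 : Integrable
        (fun ω => K a k * L ω b k + (L ω a k * K b k + L ω a k * L ω b k)) P := i1.add ig3
    rw [integral_add (integrable_const _) ig2, integral_add i1 ig3,
      integral_add i2 i3, integral_const, integral_const_mul, integral_mul_const,
      hL0, hL0, hLL]
    simp
  -- pointwise expansion of the risk
  have hintegrand : ∀ ω, ((βN ω - Vd * Vdᵀ * β)ᵀ * Sx * (βN ω - Vd * Vdᵀ * β)).trace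
      = ∑ k, ∑ b, ∑ a, (K a k + L ω a k) * Sx a b * (K b k + L ω b k) := by
    intro ω
    rw [hZ ω, trace_quad]
    exact Finset.sum_congr rfl fun k _ => Finset.sum_congr rfl fun b _ =>
      Finset.sum_congr rfl fun a _ => by simp [Matrix.add_apply]
  have iterm : ∀ (k : Fin q) (b a : Fin p),
      Integrable (fun ω => (K a k + L ω a k) * Sx a b * (K b k + L ω b k)) P := by
    intro k b a
    have h : (fun ω => (K a k + L ω a k) * Sx a b * (K b k + L ω b k))
        = fun ω => (Sx a b * (K a k + L ω a k)) * (K b k + L ω b k) := by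
      funext ω; ring
    rw [h]
    exact integrable_mul_of_memL2 ((hZmem a k).const_mul _) (hZmem b k)
  calc ∫ ω, ((βN ω - Vd * Vdᵀ * β)ᵀ * Sx * (βN ω - Vd * Vdᵀ * β)).trace ∂P
      = ∑ k, ∑ b, ∑ a, ∫ ω, (K a k + L ω a k) * Sx a b * (K b k + L ω b k) ∂P := by
        simp only [hintegrand]
        rw [integral_finset_sum _ (fun k _ => integrable_finset_sum _
          (fun b _ => integrable_finset_sum _ (fun a _ => iterm k b a)))]
        refine Finset.sum_congr rfl fun k _ => ?_
        rw [integral_finset_sum _ (fun b _ => integrable_finset_sum _ (fun a _ => iterm k b a))]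
        exact Finset.sum_congr rfl fun b _ => integral_finset_sum _ (fun a _ => iterm k b a)
    _ = ∑ k, ∑ b, ∑ a,
          (K a k * Sx a b * K b k + Sx a b * Se k k * ∑ i, A a i * A b i) := by
        refine Finset.sum_congr rfl fun k _ => Finset.sum_congr rfl fun b _ =>
          Finset.sum_congr rfl fun a _ => ?_
        have hpt : (fun ω => (K a k + L ω a k) * Sx a b * (K b k + L ω b k))
            = fun ω => Sx a b * ((K a k + L ω a k) * (K b k + L ω b k)) := by
          funext ω; ring
        rw [hpt, integral_const_mul, hcore]
        ring
    _ = (Kᵀ * Sx * K).trace + Se.trace * ((A * Aᵀ) * Sx).trace := by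
        rw [trace_quad Sx K]
        simp only [Finset.sum_add_distrib]
        congr 1
        have hAAapp : ∀ a b, (A * Aᵀ) a b = ∑ i, A a i * A b i := by
          intro a b
          simp [Matrix.mul_apply]
        have htr : ((A * Aᵀ) * Sx).trace = ∑ a, ∑ b, (∑ i, A a i * A b i) * Sx b a := by
          simp [Matrix.trace, Matrix.diag, Matrix.mul_apply]
        have hSeTr : Se.trace = ∑ k, Se k k := by
          simp [Matrix.trace, Matrix.diag]
        calc ∑ k, ∑ b, ∑ a, Sx a b * Se k k * ∑ i, A a i * A b i
            = ∑ k, Se k k * (∑ a, ∑ b, (∑ i, A a i * A b i) * Sx b a) := by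
              refine Finset.sum_congr rfl fun k _ => ?_
              rw [Finset.sum_comm, Finset.mul_sum]
              refine Finset.sum_congr rfl fun a _ => ?_
              rw [Finset.mul_sum]
              refine Finset.sum_congr rfl fun b _ => ?_
              rw [hSxsym a b]
              ring
          _ = Se.trace * ((A * Aᵀ) * Sx).trace := by
              rw [← Finset.sum_mul, ← hSeTr, ← htr]
    _ = RN Vu Du Vd Sx Se β := by
        simp only [RN]
        rw [← hMdef, vec_quad, hAAT, hKdef, Matrix.transpose_mul, hMT, add_comm]
        congr 1
        simp only [Matrix.mul_assoc]
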